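/- Let ρ : ℝ → ℝ be C^α with ρ^{(k)}(t) = o(e^{−βt}) as t → ∞ for k = 0,...,α, where β > 0 and α ≥ 1. Define q(0) = 0 and q(s) = ρ(−(α+1) log s / β)/s for s ∈ (0,1]. Then q ∈ C^α([0,1]) with q(0) = q'(0) = ⋯ = q^{(α)}(0) = 0. -/

import Mathlib

open Filter Real Finset

noncomputable def coefTDS (c : ℝ) : ℕ → ℕ → ℝ
  | 0, 0 => 1
  | 0, _+1 => 0
  | m+1, 0 => -((m:ℝ)+1) * coefTDS c m 0
  | m+1, j+1 => -c * coefTDS c m j - ((m:ℝ)+1) * coefTDS c m (j+1)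

lemma coefTDS_eq_zero (c : ℝ) : ∀ m j, m < j → coefTDS c m j = 0 := by
  intro m
  induction m with
  | zero => intro j hj; match j, hj with | (j+1), _ => rfl
  | succ m ih =>
    intro j hj
    match j, hj with
    | (j+1), hj =>
      rw [coefTDS, ih j (by omega), ih (j+1) (by omega)]
      ring

lemma coefTDS_sum (c : ℝ) (m : ℕ) (g : ℕ → ℝ) :
    ∑ j ∈ Finset.range (m+2), coefTDS c (m+1) j * g j
      = -c * ∑ j ∈ Finset.range (m+1), coefTDS c m j * g (j+1)
        - ((m:ℝ)+1) * ∑ j ∈ Finset.range (m+1), coefTDS c m j * g j := by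
  rw [Finset.sum_range_succ' _ (m+1)]
  have h1 : ∀ j ∈ Finset.range (m+1), coefTDS c (m+1) (j+1) * g (j+1)
      = -c * (coefTDS c m j * g (j+1)) - ((m:ℝ)+1) * (coefTDS c m (j+1) * g (j+1)) := by
    intro j _; rw [coefTDS]; ring
  rw [Finset.sum_congr rfl h1, Finset.sum_sub_distrib, ← Finset.mul_sum, ← Finset.mul_sum]
  have h2 : ∑ j ∈ Finset.range (m+1), coefTDS c m (j+1) * g (j+1)
      = ∑ j ∈ Finset.range (m+1), coefTDS c m j * g j - coefTDS c m 0 * g 0 := by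
    have := Finset.sum_range_succ' (fun j => coefTDS c m j * g j) (m+1)
    rw [Finset.sum_range_succ, coefTDS_eq_zero c m (m+1) (by omega)] at this
    simp only [zero_mul, add_zero] at this
    linarith [this]
  rw [h2, coefTDS]
  ring

noncomputable def qfunTDS (c : ℝ) (ρ : ℝ → ℝ) (m : ℕ) (s : ℝ) : ℝ :=
  if s = 0 then 0 else
    (∑ j ∈ Finset.range (m+1), coefTDS c m j * iteratedDeriv j ρ (-c * Real.log s)) / s^(m+1)

lemma hasDerivAt_qfunTDS {α : ℕ} (c : ℝ) {ρ : ℝ → ℝ} (hρ : ContDiff ℝ α ρ)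
    {m : ℕ} (hm : m < α) {s : ℝ} (hs : 0 < s) :
    HasDerivAt (qfunTDS c ρ m) (qfunTDS c ρ (m+1) s) s := by
  have hs0 : s ≠ 0 := hs.ne'
  have hlog : HasDerivAt (fun x : ℝ => -c * Real.log x) (-c * s⁻¹) s :=
    (Real.hasDerivAt_log hs0).const_mul (-c)
  have hterm : ∀ j ∈ Finset.range (m+1),
      HasDerivAt (fun x : ℝ => iteratedDeriv j ρ (-c * Real.log x))
        (iteratedDeriv (j+1) ρ (-c * Real.log s) * (-c * s⁻¹)) s := by
    intro j hj
    simp only [Finset.mem_range] at hj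
    have hdiff : Differentiable ℝ (iteratedDeriv j ρ) :=
      hρ.differentiable_iteratedDeriv j
        (by exact_mod_cast Nat.lt_of_lt_of_le hj (by exact_mod_cast hm))
    have hd : HasDerivAt (iteratedDeriv j ρ) (iteratedDeriv (j+1) ρ (-c * Real.log s))
        (-c * Real.log s) := by
      rw [iteratedDeriv_succ]
      exact (hdiff (-c * Real.log s)).hasDerivAt
    exact hd.comp s hlog
  have hN : HasDerivAt (fun x : ℝ => ∑ j ∈ Finset.range (m+1),
      coefTDS c m j * iteratedDeriv j ρ (-c * Real.log x))
      (∑ j ∈ Finset.range (m+1),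
        coefTDS c m j * (iteratedDeriv (j+1) ρ (-c * Real.log s) * (-c * s⁻¹))) s :=
    HasDerivAt.fun_sum (fun j hj => (hterm j hj).const_mul _)
  have hden : HasDerivAt (fun x : ℝ => x ^ (m+1)) (((m:ℝ)+1) * s ^ m) s := by
    simpa using hasDerivAt_pow (m+1) s
  have hdiv := hN.div hden (pow_ne_zero _ hs0)
  have heq : qfunTDS c ρ m =ᶠ[nhds s] fun x : ℝ =>
      (∑ j ∈ Finset.range (m+1), coefTDS c m j * iteratedDeriv j ρ (-c * Real.log x)) / x^(m+1) := by
    filter_upwards [eventually_ne_nhds hs0] with x hx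
    simp [qfunTDS, hx]
  rw [show qfunTDS c ρ (m+1) s =
      (∑ j ∈ Finset.range (m+2), coefTDS c (m+1) j * iteratedDeriv j ρ (-c * Real.log s)) / s^(m+2)
      from by simp [qfunTDS, hs0]]
  refine HasDerivAt.congr_of_eventuallyEq ?_ heq
  refine HasDerivAt.congr_deriv hdiv ?_
  rw [coefTDS_sum c m (fun j => iteratedDeriv j ρ (-c * Real.log s))]
  have hpull : ∑ j ∈ Finset.range (m+1),
      coefTDS c m j * (iteratedDeriv (j+1) ρ (-c * Real.log s) * (-c * s⁻¹))
      = (-c * s⁻¹) * ∑ j ∈ Finset.range (m+1),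
          coefTDS c m j * iteratedDeriv (j+1) ρ (-c * Real.log s) := by
    rw [Finset.mul_sum]; exact Finset.sum_congr rfl fun j _ => by ring
  rw [hpull]
  set S1 := ∑ j ∈ Finset.range (m+1), coefTDS c m j * iteratedDeriv (j+1) ρ (-c * Real.log s)
  set S0 := ∑ j ∈ Finset.range (m+1), coefTDS c m j * iteratedDeriv j ρ (-c * Real.log s)
  field_simp
  ring

lemma tendsto_qterm (α j m : ℕ) (β : ℝ) (hβ : 0 < β) (ρ : ℝ → ℝ) (c : ℝ)
    (hc : c = ((α:ℝ)+1)/β)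
    (hd : Tendsto (fun t => Real.exp (β * t) * iteratedDeriv j ρ t) atTop (nhds 0))
    (hm : m ≤ α) :
    Tendsto (fun s => iteratedDeriv j ρ (-c * Real.log s) / s^(m+1))
      (nhdsWithin 0 (Set.Ioi 0)) (nhds 0) := by
  have hcpos : 0 < c := by rw [hc]; positivity
  have htt : Tendsto (fun s : ℝ => -c * Real.log s) (nhdsWithin 0 (Set.Ioi 0)) atTop := by
    rw [tendsto_const_mul_atTop_of_neg (by linarith)]
    exact Real.tendsto_log_nhdsGT_zero
  have h1 : Tendsto (fun s : ℝ =>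
      Real.exp (β * (-c * Real.log s)) * iteratedDeriv j ρ (-c * Real.log s))
      (nhdsWithin 0 (Set.Ioi 0)) (nhds 0) := hd.comp htt
  have h2 : Tendsto (fun s : ℝ => s ^ (α - m)) (nhdsWithin 0 (Set.Ioi 0))
      (nhds ((0:ℝ) ^ (α - m))) :=
    ((continuous_pow (α-m)).tendsto 0).mono_left nhdsWithin_le_nhds
  have h3 := h1.mul h2
  rw [zero_mul] at h3
  refine h3.congr' ?_
  filter_upwards [self_mem_nhdsWithin] with s hs
  have hs0 : (0:ℝ) < s := hs
  have hbc : β * c = (α:ℝ) + 1 := by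
    rw [hc]; field_simp
  have hexp : Real.exp (β * (-c * Real.log s)) = (s ^ (α+1))⁻¹ := by
    have : β * (-c * Real.log s) = -(((α+1 : ℕ):ℝ) * Real.log s) := by
      push_cast; rw [← hbc]; ring
    rw [this, Real.exp_neg, Real.exp_nat_mul, Real.exp_log hs0]
  rw [hexp]
  have hsplit : s ^ (α + 1) = s ^ (m+1) * s ^ (α - m) := by
    rw [← pow_add]; congr 1; omega
  rw [hsplit]
  field_simp

theorem transformed_density_smooth
    (α : ℕ) (hα : 1 ≤ α) (β : ℝ) (hβ : 0 < β)
    (ρ : ℝ → ℝ) (hρ : ContDiff ℝ α ρ)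
    (hdecay : ∀ k ≤ α, Tendsto (fun t => Real.exp (β * t) * iteratedDeriv k ρ t)
        atTop (nhds 0))
    (q : ℝ → ℝ) (hq0 : q 0 = 0)
    (hq : ∀ s ∈ Set.Ioc (0:ℝ) 1, q s = ρ (-(α + 1) * Real.log s / β) / s) :
    ContDiffOn ℝ α q (Set.Icc 0 1) ∧
      ∀ k ≤ α, iteratedDerivWithin k q (Set.Icc 0 1) 0 = 0 := by
  have hUD : UniqueDiffOn ℝ (Set.Icc (0:ℝ) 1) := uniqueDiffOn_Icc one_pos
  set c : ℝ := ((α:ℝ)+1)/β with hc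
  -- q agrees with qfunTDS c ρ 0 on [0,1]
  have hq00 : ∀ m, qfunTDS c ρ m 0 = 0 := fun m => by simp [qfunTDS]
  have hEq0 : Set.EqOn q (qfunTDS c ρ 0) (Set.Icc 0 1) := by
    intro x hx
    rcases eq_or_ne x 0 with rfl | hx0
    · rw [hq0, hq00]
    · have hxI : x ∈ Set.Ioc (0:ℝ) 1 := ⟨lt_of_le_of_ne hx.1 (Ne.symm hx0), hx.2⟩
      rw [hq x hxI, qfunTDS, if_neg hx0]
      have h1 : -((α:ℝ) + 1) * Real.log x / β = -c * Real.log x := by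
        rw [hc]; ring
      rw [h1]
      simp [coefTDS, iteratedDeriv_zero]
  -- tendsto lemma specialized
  have hterm : ∀ j ≤ α, ∀ m ≤ α,
      Tendsto (fun s => iteratedDeriv j ρ (-c * Real.log s) / s^(m+1))
        (nhdsWithin 0 (Set.Ioi 0)) (nhds 0) := fun j hj m hm =>
    tendsto_qterm α j m β hβ ρ c hc (hdecay j hj) hm
  -- limit of qfunTDS at 0+
  have hlim : ∀ m ≤ α, Tendsto (qfunTDS c ρ m) (nhdsWithin 0 (Set.Ioi 0)) (nhds 0) := by
    intro m hm
    have h := tendsto_finset_sum (Finset.range (m+1)) (fun j hj =>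
      ((hterm j (le_trans (by simpa using Nat.lt_succ_iff.mp (Finset.mem_range.mp hj)) hm)
        m hm).const_mul (coefTDS c m j)))
    simp only [mul_zero, Finset.sum_const_zero] at h
    refine h.congr' ?_
    filter_upwards [self_mem_nhdsWithin] with s hs
    have hs0 : s ≠ 0 := ne_of_gt hs
    rw [qfunTDS, if_neg hs0, Finset.sum_div]
    exact Finset.sum_congr rfl fun j _ => (mul_div_assoc _ _ _).symm
  -- derivative within Icc
  have hDer : ∀ m < α, ∀ s ∈ Set.Icc (0:ℝ) 1,
      HasDerivWithinAt (qfunTDS c ρ m) (qfunTDS c ρ (m+1) s) (Set.Icc 0 1) s := by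
    intro m hm s hs
    rcases eq_or_ne s 0 with rfl | hs0
    · rw [hq00]
      rw [hasDerivWithinAt_iff_tendsto_slope]
      have key := tendsto_finset_sum (Finset.range (m+1)) (fun j hj =>
        ((hterm j (le_trans (by simpa using Nat.lt_succ_iff.mp (Finset.mem_range.mp hj))
          (le_of_lt hm)) (m+1) hm).const_mul (coefTDS c m j)))
      simp only [mul_zero, Finset.sum_const_zero] at key
      have hmono : nhdsWithin (0:ℝ) (Set.Icc 0 1 \ {0}) ≤ nhdsWithin 0 (Set.Ioi 0) :=
        nhdsWithin_mono 0 (fun x hx => lt_of_le_of_ne hx.1.1 (Ne.symm hx.2))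
      refine (key.mono_left hmono).congr' ?_
      filter_upwards [self_mem_nhdsWithin] with x hx
      have hx0 : x ≠ 0 := hx.2
      rw [slope_def_field, hq00, sub_zero, sub_zero, qfunTDS, if_neg hx0,
        div_div, ← pow_succ, Finset.sum_div]
      exact Finset.sum_congr rfl fun j _ => (mul_div_assoc _ _ _).symm
    · have hspos : 0 < s := lt_of_le_of_ne hs.1 (Ne.symm hs0)
      exact (hasDerivAt_qfunTDS c hρ hm hspos).hasDerivWithinAt
  -- continuity
  have hCont : ∀ m ≤ α, ContinuousOn (qfunTDS c ρ m) (Set.Icc 0 1) := by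
    intro m hm x hx
    rcases eq_or_ne x 0 with rfl | hx0
    · rw [← continuousWithinAt_diff_self]
      unfold ContinuousWithinAt
      rw [hq00]
      refine (hlim m hm).mono_left
        (nhdsWithin_mono 0 (fun y hy => lt_of_le_of_ne hy.1.1 (Ne.symm hy.2)))
    · have hxpos : 0 < x := lt_of_le_of_ne hx.1 (Ne.symm hx0)
      have hCA : ContinuousAt (fun y : ℝ =>
          (∑ j ∈ Finset.range (m+1), coefTDS c m j * iteratedDeriv j ρ (-c * Real.log y))
            / y^(m+1)) x := by
        refine ContinuousAt.div ?_ (continuousAt_pow x (m+1)) (pow_ne_zero _ hx0)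
        refine tendsto_finset_sum _ (fun j hj => ?_)
        have hjα : (j : WithTop ℕ∞) ≤ (α : WithTop ℕ∞) := by
          have : j ≤ α := le_trans (by simpa using Nat.lt_succ_iff.mp (Finset.mem_range.mp hj)) hm
          exact_mod_cast this
        exact (((hρ.continuous_iteratedDeriv j hjα).continuousAt).comp
          ((Real.continuousAt_log hx0).const_mul (-c))).const_mul _
      have heq : (fun y : ℝ =>
          (∑ j ∈ Finset.range (m+1), coefTDS c m j * iteratedDeriv j ρ (-c * Real.log y))
            / y^(m+1)) =ᶠ[nhds x] qfunTDS c ρ m := by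
        filter_upwards [eventually_ne_nhds hx0] with y hy
        simp [qfunTDS, hy]
      exact (hCA.congr_of_eventuallyEq heq.symm).continuousWithinAt
  -- iterated derivatives agree
  have hIter : ∀ m ≤ α,
      Set.EqOn (iteratedDerivWithin m q (Set.Icc 0 1)) (qfunTDS c ρ m) (Set.Icc 0 1) := by
    intro m
    induction m with
    | zero =>
      intro _ x hx
      rw [iteratedDerivWithin_zero]
      exact hEq0 hx
    | succ m ih =>
      intro hm x hx
      rw [iteratedDerivWithin_succ,
        derivWithin_congr (ih (by omega)) (ih (by omega) hx),
        (hDer m (by omega) x hx).derivWithin (hUD x hx)]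
  -- ContDiffOn
  have hCD : ∀ k : ℕ, ∀ m : ℕ, m + k ≤ α → ContDiffOn ℝ k (qfunTDS c ρ m) (Set.Icc 0 1) := by
    intro k
    induction k with
    | zero =>
      intro m hm
      rw [Nat.cast_zero, contDiffOn_zero]
      exact hCont m (by omega)
    | succ k ih =>
      intro m hm
      have : ((k+1 : ℕ) : WithTop ℕ∞) = (k : WithTop ℕ∞) + 1 := by push_cast; rfl
      rw [this, contDiffOn_succ_iff_derivWithin hUD]
      refine ⟨fun x hx => (hDer m (by omega) x hx).differentiableWithinAt, ?_, ?_⟩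
      · intro h; exact absurd h (by simp)
      · refine (ih (m+1) (by omega)).congr (fun x hx => ?_)
        exact (hDer m (by omega) x hx).derivWithin (hUD x hx)
  constructor
  · exact (hCD α 0 (by omega)).congr hEq0
  · intro k hk
    rw [hIter k hk (Set.mem_Icc.mpr ⟨le_refl 0, zero_le_one⟩), hq00]
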